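/- If S = [X, Y, X-bar, Y-bar] is a binary self-dual sequence of length 4n generated by CCR_{2n} (with X, Y of length n), then Delta_n(S) = [X+Y, Y+X-bar] is a self-dual sequence of length 2n generated by CCR_n. Conversely, if [X, X-bar] is a self-dual sequence of length 2n, then for any binary word Y of length n, Delta_n^{-1} applied to [X, X-bar] yields [Y, X+Y, Y-bar, X+Y-bar], which is a self-dual sequence of length 4n. -/

import Mathlib

/-- The block-difference operator `Δ_m`: `(Δ_m S) i = S (i + m) + S i`. -/
def blockDelta (m : ℕ) (S : ℕ → ZMod 2) : ℕ → ZMod 2 := fun i => S (i + m) + S i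

lemma z2_add_self (a : ZMod 2) : a + a = 0 := by fin_cases a <;> decide

lemma z2_aux (a : ZMod 2) : a + 1 + 1 = a := by fin_cases a <;> rfl

lemma z2_aux2 (a b : ZMod 2) : a + 1 + (b + 1) = a + b := by
  fin_cases a <;> fin_cases b <;> decide

lemma z2_aux3 (a b : ZMod 2) : b + 1 + (a + b) = a + 1 := by
  fin_cases a <;> fin_cases b <;> decide

lemma periodic_mul {T : ℕ → ZMod 2} {p : ℕ} (hp : ∀ i, T (i + p) = T i) :
    ∀ q i, T (i + p * q) = T i := by
  intro q
  induction q with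
  | zero => simp
  | succ k ih =>
    intro i
    have : i + p * (k + 1) = (i + p * k) + p := by ring
    rw [this, hp, ih]

/-- (1) If `S = [X, Y, X̄, Ȳ]` is a binary self-dual sequence of length `4n`
generated by `CCR_{2n}` (i.e. `4n`-periodic with `S (i + 2n) = S i + 1`), then
`Δ_n S = [X+Y, Y+X̄]` is a self-dual sequence of length `2n` generated by `CCR_n`
(`2n`-periodic with `(Δ_n S)(i + n) = (Δ_n S) i + 1`).
(2) Conversely, if `[X, X̄]` is a self-dual sequence of length `2n`, then for any
word `Y` of length `n` the member `T = [Y, X+Y, Ȳ, X+Ȳ]` of `Δ_n⁻¹ [X, X̄]` is a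
self-dual sequence of length `4n` and `Δ_n T = [X, X̄]`. -/
theorem stmt10 (n : ℕ) (hn : 0 < n) :
    (∀ S : ℕ → ZMod 2, (∀ i, S (i + 4 * n) = S i) →
      (∀ i, S (i + 2 * n) = S i + 1) →
      (∀ i, blockDelta n S (i + 2 * n) = blockDelta n S i) ∧
      (∀ i, blockDelta n S (i + n) = blockDelta n S i + 1)) ∧
    (∀ X Y T : ℕ → ZMod 2,
      (∀ i, T (i + 4 * n) = T i) →
      (∀ i < n, T i = Y i ∧ T (i + n) = X i + Y i ∧
        T (i + 2 * n) = Y i + 1 ∧ T (i + 3 * n) = X i + Y i + 1) →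
      (∀ i, T (i + 2 * n) = T i + 1) ∧
      (∀ i < n, blockDelta n T i = X i ∧ blockDelta n T (i + n) = X i + 1)) := by
  constructor
  · intro S _ hsd
    constructor
    · intro i
      simp only [blockDelta]
      have h1 : i + n + 2 * n = (i + n) + 2 * n := by ring
      have h2 : i + 2 * n + n = (i + n) + 2 * n := by ring
      rw [h2, hsd (i + n), hsd i, z2_aux2]
    · intro i
      simp only [blockDelta]
      have h2 : i + n + n = i + 2 * n := by ring
      rw [h2, hsd i]
      ring
  · intro X Y T hper hval
    have key : ∀ i, T (i + 2 * n) = T i + 1 := by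
      have hq := periodic_mul hper
      intro i
      obtain ⟨q, r, hr, rfl⟩ : ∃ q r, r < 4 * n ∧ i = r + 4 * n * q :=
        ⟨i / (4 * n), i % (4 * n), Nat.mod_lt _ (by omega), (Nat.mod_add_div i (4*n)).symm⟩
      have e1 : r + 4 * n * q + 2 * n = (r + 2 * n) + 4 * n * q := by ring
      rw [e1, hq q, hq q]
      rcases lt_or_ge r n with h | h
      · obtain ⟨_, _, h3, _⟩ := hval r h
        rw [h3, (hval r h).1]
      rcases lt_or_ge r (2 * n) with h2 | h2
      · set j := r - n with hj
        have hjn : j < n := by omega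
        have er : r = j + n := by omega
        have er2 : r + 2 * n = j + 3 * n := by omega
        rw [er2, er, (hval j hjn).2.2.2, (hval j hjn).2.1]
      rcases lt_or_ge r (3 * n) with h3 | h3
      · set j := r - 2 * n with hj
        have hjn : j < n := by omega
        have er : r = j + 2 * n := by omega
        have er2 : r + 2 * n = (j) + 4 * n := by omega
        rw [er2, er]
        have : j + 4 * n = j + 4 * n * 1 := by ring
        rw [this, hq 1, (hval j hjn).1, (hval j hjn).2.2.1, z2_aux]
      · set j := r - 3 * n with hj
        have hjn : j < n := by omega
        have er : r = j + 3 * n := by omega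
        have er2 : r + 2 * n = (j + n) + 4 * n * 1 := by omega
        rw [er2, er, hq 1, (hval j hjn).2.1, (hval j hjn).2.2.2, z2_aux]
    refine ⟨key, fun i hi => ?_⟩
    obtain ⟨h1, h2, h3, h4⟩ := hval i hi
    constructor
    · simp only [blockDelta]
      rw [h2, h1]
      rw [add_assoc, z2_add_self, add_zero]
    · simp only [blockDelta]
      have : i + n + n = i + 2 * n := by ring
      rw [this, h3, h2, z2_aux3]
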